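/- Chen's shuffle formula for iterated integrals: let t > 0 and let f_1,…,f_{n+m} : [0,t] → ℝ be continuous functions. Then F(f_1,…,f_n)(t) · F(f_{n+1},…,f_{n+m})(t) = ∑_{σ ∈ Sh_{n,m}} F(f_{σ^{-1}(1)}, f_{σ^{-1}(2)}, …, f_{σ^{-1}(n+m)})(t), where Sh_{n,m} is the set of permutations σ of [n+m] with σ(1) < ⋯ < σ(n) and σ(n+1) < ⋯ < σ(n+m). -/

import Mathlib

open scoped Classical

noncomputable section

/-- Auxiliary definition: iterated integral over the simplex, the list of integrands
being given in reverse order (outermost integrand first). -/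
def iterIntRev : List (ℝ → ℝ) → ℝ → ℝ
  | [] => fun _ => 1
  | g :: gs => fun t => ∫ s in (0 : ℝ)..t, iterIntRev gs s * g s

/-- The iterated integral
`F(g₁,…,g_k)(t) = ∫_{0 ≤ s₁ ≤ ⋯ ≤ s_k ≤ t} g₁(s₁)⋯g_k(s_k) ds₁⋯ds_k`,
defined recursively by `F()(t) = 1` and
`F(g₁,…,g_k)(t) = ∫_0^t F(g₁,…,g_{k-1})(s) g_k(s) ds`. -/
def iterInt (l : List (ℝ → ℝ)) (t : ℝ) : ℝ := iterIntRev l.reverse t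

/-- The set `Sh_{n,m}` of `(n,m)`-shuffles: permutations `σ` of `[n+m]` with
`σ(1) < ⋯ < σ(n)` and `σ(n+1) < ⋯ < σ(n+m)`. -/
def shuffleSet (n m : ℕ) : Finset (Equiv.Perm (Fin (n + m))) :=
  Finset.univ.filter (fun σ =>
    (∀ i j : Fin (n + m), i < j → (j : ℕ) < n → σ i < σ j) ∧
    (∀ i j : Fin (n + m), i < j → n ≤ (i : ℕ) → σ i < σ j))

namespace ChenAux


variable {α : Type*} {β : Type*}

/-- All shuffles (interleavings) of two lists. -/
def shuffles : List α → List α → List (List α)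
  | [], b => [b]
  | x :: a, [] => [x :: a]
  | x :: a, y :: b =>
      ((shuffles a (y :: b)).map (x :: ·)) ++ ((shuffles (x :: a) b).map (y :: ·))
termination_by a b => a.length + b.length

@[simp] lemma shuffles_nil_left (b : List α) : shuffles [] b = [b] := by
  cases b <;> simp [shuffles]

@[simp] lemma shuffles_nil_right (x : α) (a : List α) : shuffles (x :: a) [] = [x :: a] := by
  simp [shuffles]

lemma shuffles_cons_cons (x y : α) (a b : List α) :
    shuffles (x :: a) (y :: b)
      = ((shuffles a (y :: b)).map (x :: ·)) ++ ((shuffles (x :: a) b).map (y :: ·)) := by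
  simp [shuffles]

lemma mem_shuffles_perm : ∀ {a b w : List α}, w ∈ shuffles a b → w.Perm (a ++ b) := by
  intro a
  induction a with
  | nil => intro b w hw; simp at hw; simp [hw]
  | cons x a iha =>
    intro b
    induction b with
    | nil => intro w hw; simp at hw; simp [hw]
    | cons y b ihb =>
      intro w hw
      rw [shuffles_cons_cons] at hw
      rcases List.mem_append.1 hw with hw | hw
      · rcases List.mem_map.1 hw with ⟨w', hw', rfl⟩
        exact ((iha hw').cons x)
      · rcases List.mem_map.1 hw with ⟨w', hw', rfl⟩
        refine ((ihb hw').cons y).trans ?_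
        exact (List.perm_middle).symm

lemma shuffles_sublist_left : ∀ {a b w : List α}, w ∈ shuffles a b → a.Sublist w := by
  intro a
  induction a with
  | nil => intro b w hw; simp
  | cons x a iha =>
    intro b
    induction b with
    | nil => intro w hw; simp at hw; simp [hw]
    | cons y b ihb =>
      intro w hw
      rw [shuffles_cons_cons] at hw
      rcases List.mem_append.1 hw with hw | hw
      · rcases List.mem_map.1 hw with ⟨w', hw', rfl⟩
        exact (iha hw').cons₂ x
      · rcases List.mem_map.1 hw with ⟨w', hw', rfl⟩
        exact (ihb hw').cons y

lemma shuffles_sublist_right : ∀ {a b w : List α}, w ∈ shuffles a b → b.Sublist w := by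
  intro a
  induction a with
  | nil => intro b w hw; simp at hw; simp [hw]
  | cons x a iha =>
    intro b
    induction b with
    | nil => intro w hw; simp
    | cons y b ihb =>
      intro w hw
      rw [shuffles_cons_cons] at hw
      rcases List.mem_append.1 hw with hw | hw
      · rcases List.mem_map.1 hw with ⟨w', hw', rfl⟩
        exact (iha hw').cons x
      · rcases List.mem_map.1 hw with ⟨w', hw', rfl⟩
        exact (ihb hw').cons₂ y

lemma sublist_of_ne_head {l w : List α} {x c : α} (h : (x :: l).Sublist (c :: w))
    (hne : x ≠ c) : (x :: l).Sublist w := by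
  cases h with
  | cons _ h => exact h
  | cons_cons _ h => exact absurd rfl hne

lemma mem_shuffles_of : ∀ {w a b : List α}, (a ++ b).Nodup → w.Perm (a ++ b) →
    a.Sublist w → b.Sublist w → w ∈ shuffles a b := by
  intro w
  induction w with
  | nil =>
    intro a b _ hp _ _
    have h0 : a ++ b = [] := hp.symm.eq_nil
    rcases List.append_eq_nil_iff.1 h0 with ⟨rfl, rfl⟩
    simp
  | cons c w ih =>
    intro a b hn hp ha hb
    have hwnd : (c :: w).Nodup := (hp.nodup_iff).2 hn
    match a, b, hn, hp, ha, hb with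
    | [], b, hn, hp, ha, hb =>
      have : b = c :: w := hb.eq_of_length (by simpa using hp.length_eq.symm)
      simp [this]
    | x :: a, [], hn, hp, ha, hb =>
      have : x :: a = c :: w := ha.eq_of_length (by simpa using hp.length_eq.symm)
      simp [this]
    | x :: a, y :: b, hn, hp, ha, hb =>
      by_cases hx : c = x
      · subst hx
        have ha' : a.Sublist w := by
          cases ha with
          | cons _ h => exact (List.sublist_cons_self c a).trans h
          | cons_cons _ h => exact h
        have hcb : c ∉ (y :: b) := by
          have h1 : c ∉ a ++ (y :: b) := (List.nodup_cons.1 hn).1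
          exact fun hc => h1 (List.mem_append.2 (Or.inr hc))
        have hb' : (y :: b).Sublist w := sublist_of_ne_head hb (fun h => hcb (h ▸ List.mem_cons_self (a := y) (l := b)))
        have hp' : w.Perm (a ++ (y :: b)) := by
          have : (c :: w).Perm (c :: (a ++ (y :: b))) := hp
          exact this.cons_inv
        have hn' : (a ++ (y :: b)).Nodup := (List.nodup_cons.1 hn).2
        have : w ∈ shuffles a (y :: b) := ih hn' hp' ha' hb'
        rw [shuffles_cons_cons]
        exact List.mem_append.2 (Or.inl (List.mem_map.2 ⟨w, this, rfl⟩))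
      · have hy : c = y := by
          by_contra hy
          have hcw : c ∉ w := (List.nodup_cons.1 hwnd).1
          have hcmem : c ∈ (x :: a) ++ (y :: b) := hp.subset (List.mem_cons_self (a := c) (l := w))
          rcases List.mem_append.1 hcmem with hc | hc
          · have hca : c ∈ a := by
              rcases List.mem_cons.1 hc with h | h
              · exact absurd h hx
              · exact h
            have : (x :: a).Sublist w := sublist_of_ne_head ha (Ne.symm hx)
            exact hcw (this.subset (List.mem_cons_of_mem x hca))
          · have hcb : c ∈ b := by
              rcases List.mem_cons.1 hc with h | h
              · exact absurd h hy
              · exact h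
            have : (y :: b).Sublist w := sublist_of_ne_head hb (Ne.symm hy)
            exact hcw (this.subset (List.mem_cons_of_mem y hcb))
        subst hy
        have ha' : (x :: a).Sublist w := sublist_of_ne_head ha (Ne.symm hx)
        have hb' : b.Sublist w := by
          cases hb with
          | cons _ h => exact (List.sublist_cons_self c b).trans h
          | cons_cons _ h => exact h
        have hp' : w.Perm ((x :: a) ++ b) := by
          have h1 : ((x :: a) ++ (c :: b)).Perm (c :: ((x :: a) ++ b)) := List.perm_middle
          exact (hp.trans h1).cons_inv
        have hn' : ((x :: a) ++ b).Nodup := by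
          have : ((x :: a) ++ (c :: b)).Perm (c :: ((x :: a) ++ b)) := List.perm_middle
          exact (List.nodup_cons.1 (this.nodup_iff.1 hn)).2
        have : w ∈ shuffles (x :: a) b := ih hn' hp' ha' hb'
        rw [shuffles_cons_cons]
        exact List.mem_append.2 (Or.inr (List.mem_map.2 ⟨w, this, rfl⟩))

lemma nodup_shuffles : ∀ {a b : List α}, (a ++ b).Nodup → (shuffles a b).Nodup := by
  intro a
  induction a with
  | nil => intro b _; simp
  | cons x a iha =>
    intro b
    induction b with
    | nil => intro _; simp
    | cons y b ihb =>
      intro hn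
      rw [shuffles_cons_cons]
      have hxy : x ≠ y := by
        have h1 : x ∉ a ++ (y :: b) := (List.nodup_cons.1 hn).1
        exact fun h => h1 (List.mem_append.2 (Or.inr (List.mem_cons.2 (Or.inl h))))
      have hn1 : (a ++ (y :: b)).Nodup := (List.nodup_cons.1 hn).2
      have hn2 : ((x :: a) ++ b).Nodup := by
        have h1 : ((x :: a) ++ (y :: b)).Perm (y :: ((x :: a) ++ b)) := List.perm_middle
        exact (List.nodup_cons.1 (h1.nodup_iff.1 hn)).2
      refine List.Nodup.append ((iha hn1).map (List.cons_injective)) ((ihb hn2).map (List.cons_injective)) ?_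
      intro l hl hl'
      rcases List.mem_map.1 hl with ⟨w, _, rfl⟩
      rcases List.mem_map.1 hl' with ⟨w', _, h⟩
      exact hxy (List.head_eq_of_cons_eq h.symm ▸ rfl)

lemma shuffles_map (F : α → β) : ∀ (a b : List α),
    shuffles (a.map F) (b.map F) = (shuffles a b).map (List.map F) := by
  intro a
  induction a with
  | nil => intro b; simp
  | cons x a iha =>
    intro b
    induction b with
    | nil => simp
    | cons y b ihb =>
      simp only [List.map_cons, shuffles_cons_cons, List.map_append, List.map_map]
      rw [← List.map_cons (f := F) (a := x), ← List.map_cons (f := F) (a := y)] at *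
      rw [iha (y :: b), ihb]
      simp only [List.map_map]
      rfl




lemma iterIntRev_nil (t : ℝ) : iterIntRev [] t = 1 := rfl

lemma iterIntRev_cons (g : ℝ → ℝ) (gs : List (ℝ → ℝ)) (t : ℝ) :
    iterIntRev (g :: gs) t = ∫ s in (0 : ℝ)..t, iterIntRev gs s * g s := rfl

lemma iterIntRev_continuous : ∀ {l : List (ℝ → ℝ)}, (∀ g ∈ l, Continuous g) →
    Continuous (iterIntRev l) := by
  intro l
  induction l with
  | nil => intro _; exact continuous_const
  | cons g gs ih =>
    intro h
    have hψ : Continuous fun s => iterIntRev gs s * g s :=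
      (ih fun u hu => h u (List.mem_cons_of_mem g hu)).mul (h g (List.mem_cons_self (a := g) (l := gs)))
    show Continuous fun t => ∫ s in (0 : ℝ)..t, iterIntRev gs s * g s
    exact continuous_iff_continuousAt.2 fun t =>
      ((hψ.integral_hasStrictDerivAt 0 t).hasDerivAt.continuousAt)

lemma iterIntRev_hasDerivAt {g : ℝ → ℝ} {gs : List (ℝ → ℝ)} (hg : Continuous g)
    (hgs : ∀ u ∈ gs, Continuous u) (t : ℝ) :
    HasDerivAt (iterIntRev (g :: gs)) (iterIntRev gs t * g t) t := by
  have hψ : Continuous fun s => iterIntRev gs s * g s := (iterIntRev_continuous hgs).mul hg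
  exact (hψ.integral_hasStrictDerivAt 0 t).hasDerivAt

lemma hasDerivAt_list_sum {ι : Type*} {u : ℝ} : ∀ {l : List ι} {F : ι → ℝ → ℝ} {F' : ι → ℝ},
    (∀ i ∈ l, HasDerivAt (F i) (F' i) u) →
    HasDerivAt (fun t => (l.map (fun i => F i t)).sum) ((l.map F').sum) u := by
  intro l
  induction l with
  | nil => intro F F' _; simpa using hasDerivAt_const u (0 : ℝ)
  | cons i l ih =>
    intro F F' h
    simp only [List.map_cons, List.sum_cons]
    exact (h i (List.mem_cons_self (a := i) (l := l))).add (ih fun j hj => h j (List.mem_cons_of_mem i hj))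

lemma list_sum_map_mul_right {ι : Type*} (l : List ι) (f : ι → ℝ) (c : ℝ) :
    (l.map (fun i => f i * c)).sum = (l.map f).sum * c := by
  induction l with
  | nil => simp
  | cons i l ih => simp [ih, add_mul]

lemma chen_list : ∀ (a b : List (ℝ → ℝ)), (∀ g ∈ a, Continuous g) → (∀ g ∈ b, Continuous g) →
    ∀ t : ℝ, iterIntRev a t * iterIntRev b t
      = ((shuffles a b).map (fun w => iterIntRev w t)).sum := by
  intro a
  induction a with
  | nil =>
    intro b _ _ t
    rw [shuffles_nil_left]
    simp [iterIntRev_nil]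
  | cons x a iha =>
    intro b
    induction b with
    | nil =>
      intro _ _ t
      rw [shuffles_nil_right]
      simp [iterIntRev_nil]
    | cons y b ihb =>
      intro ha hb t
      have hx : Continuous x := ha x (List.mem_cons_self (a := x) (l := a))
      have hy : Continuous y := hb y (List.mem_cons_self (a := y) (l := b))
      have ha' : ∀ g ∈ a, Continuous g := fun g hg => ha g (List.mem_cons_of_mem x hg)
      have hb' : ∀ g ∈ b, Continuous g := fun g hg => hb g (List.mem_cons_of_mem y hg)
      have hcontw1 : ∀ w ∈ shuffles a (y :: b), ∀ g ∈ w, Continuous g := by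
        intro w hw g hg
        have := (mem_shuffles_perm hw).subset hg
        rcases List.mem_append.1 this with h | h
        · exact ha' g h
        · exact hb g h
      have hcontw2 : ∀ w ∈ shuffles (x :: a) b, ∀ g ∈ w, Continuous g := by
        intro w hw g hg
        have := (mem_shuffles_perm hw).subset hg
        rcases List.mem_append.1 this with h | h
        · exact ha g h
        · exact hb' g h
      -- the function L - R
      set L : ℝ → ℝ := fun v => iterIntRev (x :: a) v * iterIntRev (y :: b) v with hL
      set R : ℝ → ℝ := fun v =>
        ((shuffles (x :: a) (y :: b)).map (fun w => iterIntRev w v)).sum with hR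
      have key : ∀ u : ℝ, HasDerivAt (fun v => L v - R v) 0 u := by
        intro u
        have hA := iterIntRev_hasDerivAt hx ha' u
        have hB := iterIntRev_hasDerivAt hy hb' u
        have h1 : HasDerivAt L
            (iterIntRev a u * x u * iterIntRev (y :: b) u
              + iterIntRev (x :: a) u * (iterIntRev b u * y u)) u := hA.mul hB
        have d1 : HasDerivAt
            (fun v => ((shuffles a (y :: b)).map (fun w => iterIntRev (x :: w) v)).sum)
            (((shuffles a (y :: b)).map (fun w => iterIntRev w u * x u)).sum) u :=
          hasDerivAt_list_sum (fun w hw => iterIntRev_hasDerivAt hx (hcontw1 w hw) u)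
        have d2 : HasDerivAt
            (fun v => ((shuffles (x :: a) b).map (fun w => iterIntRev (y :: w) v)).sum)
            (((shuffles (x :: a) b).map (fun w => iterIntRev w u * y u)).sum) u :=
          hasDerivAt_list_sum (fun w hw => iterIntRev_hasDerivAt hy (hcontw2 w hw) u)
        have hRdef : R = fun v =>
            ((shuffles a (y :: b)).map (fun w => iterIntRev (x :: w) v)).sum
              + ((shuffles (x :: a) b).map (fun w => iterIntRev (y :: w) v)).sum := by
          funext v
          show ((shuffles (x :: a) (y :: b)).map (fun w => iterIntRev w v)).sum = _
          rw [shuffles_cons_cons, List.map_append, List.sum_append,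
            List.map_map, List.map_map]
          rfl
        have h2 : HasDerivAt R
            (((shuffles a (y :: b)).map (fun w => iterIntRev w u * x u)).sum
              + ((shuffles (x :: a) b).map (fun w => iterIntRev w u * y u)).sum) u := by
          rw [hRdef]; exact d1.add d2
        have hsum1 : ((shuffles a (y :: b)).map (fun w => iterIntRev w u * x u)).sum
            = iterIntRev a u * iterIntRev (y :: b) u * x u := by
          rw [list_sum_map_mul_right, ← iha (y :: b) ha' hb u]
        have hsum2 : ((shuffles (x :: a) b).map (fun w => iterIntRev w u * y u)).sum
            = iterIntRev (x :: a) u * iterIntRev b u * y u := by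
          rw [list_sum_map_mul_right, ← ihb ha hb' u]
        rw [hsum1, hsum2] at h2
        have := h1.sub h2
        exact this.congr_deriv (by ring)
      have hconst : ∀ v : ℝ, L v - R v = L 0 - R 0 :=
        fun v => is_const_of_deriv_eq_zero
          (fun u => (key u).differentiableAt) (fun u => (key u).deriv) v 0
      have hL0 : L 0 = 0 := by
        rw [hL]
        show iterIntRev (x :: a) 0 * iterIntRev (y :: b) 0 = 0
        rw [iterIntRev_cons, intervalIntegral.integral_same, zero_mul]
      have hR0 : R 0 = 0 := by
        show ((shuffles (x :: a) (y :: b)).map (fun w => iterIntRev w 0)).sum = 0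
        apply List.sum_eq_zero
        intro r hr
        rcases List.mem_map.1 hr with ⟨w, hw, rfl⟩
        rw [shuffles_cons_cons] at hw
        rcases List.mem_append.1 hw with h | h
        · rcases List.mem_map.1 h with ⟨w', _, rfl⟩
          rw [iterIntRev_cons, intervalIntegral.integral_same]
        · rcases List.mem_map.1 h with ⟨w', _, rfl⟩
          rw [iterIntRev_cons, intervalIntegral.integral_same]
      have := hconst t
      rw [hL0, hR0] at this
      have : L t = R t := by linarith
      exact this

lemma iterIntRev_congr {T : ℝ} : ∀ {l l' : List (ℝ → ℝ)},
    List.Forall₂ (fun g g' => Set.EqOn g g' (Set.Icc 0 T)) l l' →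
    ∀ s ∈ Set.Icc (0:ℝ) T, iterIntRev l s = iterIntRev l' s := by
  intro l l' h
  induction h with
  | nil => intro s _; rfl
  | @cons g g' gs gs' hg _ ih =>
    intro s hs
    rw [iterIntRev_cons, iterIntRev_cons]
    apply intervalIntegral.integral_congr
    intro u hu
    rw [Set.uIcc_of_le hs.1] at hu
    have hu' : u ∈ Set.Icc (0:ℝ) T := ⟨hu.1, le_trans hu.2 hs.2⟩
    show iterIntRev gs u * g u = iterIntRev gs' u * g' u
    rw [ih u hu', hg hu']


variable {α : Type*} {β : Type*}

-- mem_shuffles_of, nodup_shuffles, shuffles_map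

lemma ofFn_reverse {n : ℕ} (g : Fin n → α) :
    (List.ofFn g).reverse = List.ofFn (fun i => g (Fin.rev i)) := by
  apply List.ext_getElem
  · simp
  · intro i h1 h2
    simp only [List.getElem_reverse, List.getElem_ofFn]
    congr 1
    ext
    simp [Fin.rev]
    omega

lemma ofFn_comp_sublist {N k : ℕ} {g : Fin N → α} {e : Fin k → Fin N} (he : StrictMono e) :
    (List.ofFn (fun i => g (e i))).Sublist (List.ofFn g) := by
  rw [List.sublist_iff_exists_fin_orderEmbedding_get_eq]
  refine ⟨OrderEmbedding.ofStrictMono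
    (fun i => Fin.cast (List.length_ofFn (f := g)).symm (e (Fin.cast List.length_ofFn i))) ?_, ?_⟩
  · intro i j hij
    simp only [Fin.lt_def, Fin.coe_cast]
    exact he (show Fin.cast List.length_ofFn i < Fin.cast List.length_ofFn j from hij)
  · intro ix
    simp only [List.get_ofFn]
    congr 1

lemma ofFn_two (g : Fin 2 → α) : List.ofFn g = [g 0, g 1] := by
  simp [List.ofFn_succ]

lemma strictMono_pair {k : ℕ} {x y : Fin k} (h : x < y) :
    StrictMono (fun p : Fin 2 => if p = 0 then x else y) := by
  intro p q hpq
  fin_cases p <;> fin_cases q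
  · exact absurd hpq (by simp)
  · simpa using h
  · exact absurd hpq (by simp [Fin.lt_def])
  · exact absurd hpq (by simp)

/-- The reversed first index list. -/
def IrevL (n m : ℕ) : List (Fin (n + m)) := List.ofFn (fun i : Fin n => Fin.castAdd m (Fin.rev i))
/-- The reversed second index list. -/
def JrevL (n m : ℕ) : List (Fin (n + m)) := List.ofFn (fun j : Fin m => Fin.natAdd n (Fin.rev j))
/-- The word (in outermost-first order) associated with a permutation. -/
def word {n m : ℕ} (σ : Equiv.Perm (Fin (n + m))) : List (Fin (n + m)) :=
  List.ofFn (fun k => σ⁻¹ (Fin.rev k))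

lemma nodup_IJ (n m : ℕ) : ((IrevL n m) ++ (JrevL n m)).Nodup := by
  refine List.Nodup.append ?_ ?_ ?_
  · refine List.nodup_ofFn.2 (fun a b hab => Fin.rev_injective ?_)
    have := congrArg Fin.val hab
    simp only [Fin.coe_castAdd] at this
    exact Fin.ext this
  · refine List.nodup_ofFn.2 (fun a b hab => Fin.rev_injective ?_)
    have := congrArg Fin.val hab
    simp only [Fin.coe_natAdd] at this
    exact Fin.ext (by omega)
  · intro x hx hy
    rw [IrevL, List.mem_ofFn] at hx
    rw [JrevL, List.mem_ofFn] at hy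
    obtain ⟨i, hi⟩ := hx
    obtain ⟨j, hj⟩ := hy
    have h1 : (x : ℕ) < n := by rw [← hi]; simpa using (Fin.rev i).isLt
    have h2 : n ≤ (x : ℕ) := by rw [← hj]; simp
    omega

lemma mem_IJ {n m : ℕ} (x : Fin (n + m)) : x ∈ (IrevL n m) ++ (JrevL n m) := by
  rcases lt_or_ge (x : ℕ) n with h | h
  · refine List.mem_append.2 (Or.inl ?_)
    rw [IrevL, List.mem_ofFn]
    refine ⟨Fin.rev ⟨x, h⟩, ?_⟩
    simp only [Fin.rev_rev]
    ext; simp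
  · refine List.mem_append.2 (Or.inr ?_)
    rw [JrevL, List.mem_ofFn]
    refine ⟨Fin.rev ⟨(x : ℕ) - n, by omega⟩, ?_⟩
    simp only [Fin.rev_rev]
    ext
    simp only [Fin.coe_natAdd]
    omega

lemma nodup_word {n m : ℕ} (σ : Equiv.Perm (Fin (n + m))) : (word σ).Nodup :=
  List.nodup_ofFn.2 ((σ⁻¹).injective.comp Fin.rev_injective)

lemma mem_word {n m : ℕ} (σ : Equiv.Perm (Fin (n + m))) (x : Fin (n + m)) : x ∈ word σ := by
  rw [word, List.mem_ofFn]
  exact ⟨Fin.rev (σ x), by simp [Fin.rev_rev]⟩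

lemma word_mem_shuffles {n m : ℕ} {σ : Equiv.Perm (Fin (n + m))} (hσ : σ ∈ shuffleSet n m) :
    word σ ∈ shuffles (IrevL n m) (JrevL n m) := by
  rw [shuffleSet, Finset.mem_filter] at hσ
  obtain ⟨-, h1, h2⟩ := hσ
  apply mem_shuffles_of (nodup_IJ n m)
  · rw [List.perm_ext_iff_of_nodup (nodup_word σ) (nodup_IJ n m)]
    exact fun x => iff_of_true (mem_word σ x) (mem_IJ x)
  · have he : StrictMono (fun i : Fin n => Fin.rev (σ (Fin.castAdd m (Fin.rev i)))) := by
      intro i j hij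
      rw [Fin.rev_lt_rev]
      apply h1
      · rw [Fin.lt_def]
        simpa [Fin.lt_def] using Fin.rev_lt_rev.2 hij
      · simpa using (Fin.rev i).isLt
    have := ofFn_comp_sublist (g := fun k => σ⁻¹ (Fin.rev k)) he
    rw [IrevL, word]
    convert this using 2
    funext i
    simp [Fin.rev_rev]
  · have he : StrictMono (fun j : Fin m => Fin.rev (σ (Fin.natAdd n (Fin.rev j)))) := by
      intro i j hij
      rw [Fin.rev_lt_rev]
      apply h2
      · rw [Fin.lt_def]
        simpa [Fin.lt_def] using Fin.rev_lt_rev.2 hij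
      · simp
    have := ofFn_comp_sublist (g := fun k => σ⁻¹ (Fin.rev k)) he
    rw [JrevL, word]
    convert this using 2
    funext j
    simp [Fin.rev_rev]

lemma pair_sublist_Irev {n m : ℕ} {i j : Fin (n + m)} (hij : i < j) (hj : (j : ℕ) < n) :
    [j, i].Sublist (IrevL n m) := by
  have hi : (i : ℕ) < n := lt_trans hij hj
  have hlt : Fin.rev (⟨j, hj⟩ : Fin n) < Fin.rev (⟨i, hi⟩ : Fin n) :=
    Fin.rev_lt_rev.2 (Fin.mk_lt_mk.2 hij)
  have hsub := ofFn_comp_sublist (g := fun i : Fin n => Fin.castAdd m (Fin.rev i))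
    (strictMono_pair hlt)
  rw [ofFn_two] at hsub
  rw [if_pos rfl, if_neg (by decide : ¬ (1 : Fin 2) = 0)] at hsub
  simp only [Fin.rev_rev] at hsub
  have e0 : Fin.castAdd m (⟨(j : ℕ), hj⟩ : Fin n) = j := by ext; simp
  have e1 : Fin.castAdd m (⟨(i : ℕ), hi⟩ : Fin n) = i := by ext; simp
  rwa [e0, e1] at hsub

lemma pair_sublist_Jrev {n m : ℕ} {i j : Fin (n + m)} (hij : i < j) (hi : n ≤ (i : ℕ)) :
    [j, i].Sublist (JrevL n m) := by
  have hj : n ≤ (j : ℕ) := le_trans hi (le_of_lt hij)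
  have hi' : (i : ℕ) - n < m := by have := i.isLt; omega
  have hj' : (j : ℕ) - n < m := by have := j.isLt; omega
  have hlt : Fin.rev (⟨(j : ℕ) - n, hj'⟩ : Fin m) < Fin.rev (⟨(i : ℕ) - n, hi'⟩ : Fin m) := by
    rw [Fin.rev_lt_rev]
    simp only [Fin.lt_def]
    have : (i : ℕ) < (j : ℕ) := hij
    omega
  have hsub := ofFn_comp_sublist (g := fun j : Fin m => Fin.natAdd n (Fin.rev j))
    (strictMono_pair hlt)
  rw [ofFn_two] at hsub
  rw [if_pos rfl, if_neg (by decide : ¬ (1 : Fin 2) = 0)] at hsub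
  simp only [Fin.rev_rev] at hsub
  have e0 : Fin.natAdd n (⟨(j : ℕ) - n, hj'⟩ : Fin m) = j := by
    ext; simp only [Fin.coe_natAdd]; omega
  have e1 : Fin.natAdd n (⟨(i : ℕ) - n, hi'⟩ : Fin m) = i := by
    ext; simp only [Fin.coe_natAdd]; omega
  rwa [e0, e1] at hsub

lemma pair_get {x y : α} {w : List α} (h : [x, y].Sublist w) :
    ∃ p q : Fin w.length, p < q ∧ w.get p = x ∧ w.get q = y := by
  rw [List.sublist_iff_exists_fin_orderEmbedding_get_eq] at h
  obtain ⟨f, hf⟩ := h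
  refine ⟨f ⟨0, by simp⟩, f ⟨1, by simp⟩, f.strictMono (by simp [Fin.lt_def]), ?_, ?_⟩
  · rw [← hf]; rfl
  · rw [← hf]; rfl

lemma exists_word_eq {n m : ℕ} {w : List (Fin (n + m))}
    (hw : w ∈ shuffles (IrevL n m) (JrevL n m)) :
    ∃ σ ∈ shuffleSet n m, word σ = w := by
  have hperm := mem_shuffles_perm hw
  have hlen : w.length = n + m := by
    have := hperm.length_eq
    simpa [IrevL, JrevL] using this
  have hwnd : w.Nodup := (hperm.nodup_iff).2 (nodup_IJ n m)
  set u : Fin (n + m) → Fin (n + m) :=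
    fun k => w.get (Fin.cast hlen.symm (Fin.rev k)) with hu
  have huinj : Function.Injective u := by
    intro a b hab
    have hg : Fin.cast hlen.symm (Fin.rev a) = Fin.cast hlen.symm (Fin.rev b) :=
      List.nodup_iff_injective_get.1 hwnd hab
    exact Fin.rev_injective (Fin.cast_injective hlen.symm hg)
  have hbij := Finite.injective_iff_bijective.1 huinj
  set e : Equiv.Perm (Fin (n + m)) := Equiv.ofBijective u hbij with he
  set σ : Equiv.Perm (Fin (n + m)) := e.symm with hσ
  have hinv : ∀ k, σ⁻¹ k = u k := by
    intro k
    rw [hσ, Equiv.Perm.inv_def, Equiv.symm_symm]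
    rfl
  have hword : word σ = w := by
    apply List.ext_get
    · simp [word, hlen]
    · intro p h1 h2
      simp only [word, List.get_ofFn]
      rw [hinv, hu]
      simp [Fin.rev_rev]
  have hσget : ∀ (x : Fin (n + m)) (p : Fin w.length), w.get p = x →
      σ x = Fin.rev (Fin.cast hlen p) := by
    intro x p hp
    rw [hσ, Equiv.symm_apply_eq, he, Equiv.ofBijective_apply, hu]
    simp only [Fin.rev_rev]
    have hcc : Fin.cast hlen.symm (Fin.cast hlen p) = p := by ext; simp
    rw [hcc]
    exact hp.symm
  refine ⟨σ, ?_, hword⟩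
  rw [shuffleSet, Finset.mem_filter]
  refine ⟨Finset.mem_univ _, ?_, ?_⟩
  · intro i j hij hjn
    have hsub : [j, i].Sublist w := (pair_sublist_Irev hij hjn).trans (shuffles_sublist_left hw)
    obtain ⟨p, q, hpq, hpj, hqi⟩ := pair_get hsub
    rw [hσget j p hpj, hσget i q hqi]
    rw [Fin.rev_lt_rev, Fin.lt_def]
    simp only [Fin.coe_cast]
    exact hpq
  · intro i j hij hin
    have hsub : [j, i].Sublist w := (pair_sublist_Jrev hij hin).trans (shuffles_sublist_right hw)
    obtain ⟨p, q, hpq, hpj, hqi⟩ := pair_get hsub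
    rw [hσget j p hpj, hσget i q hqi]
    rw [Fin.rev_lt_rev, Fin.lt_def]
    simp only [Fin.coe_cast]
    exact hpq

lemma word_injective {n m : ℕ} : Function.Injective (word (n := n) (m := m)) := by
  intro σ τ h
  rw [word, word, List.ofFn_inj] at h
  have : ∀ k, σ⁻¹ k = τ⁻¹ k := by
    intro k
    have := congrFun h (Fin.rev k)
    simpa [Fin.rev_rev] using this
  have h2 : σ⁻¹ = τ⁻¹ := Equiv.ext this
  exact inv_injective h2

lemma shuffle_multiset (n m : ℕ) :
    (shuffleSet n m).val.map word = ((shuffles (IrevL n m) (JrevL n m) : List _) : Multiset (List (Fin (n + m)))) := by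
  have h1 : ((shuffleSet n m).val.map word).Nodup :=
    Multiset.Nodup.map word_injective (shuffleSet n m).nodup
  have h2 : ((shuffles (IrevL n m) (JrevL n m) : List _) : Multiset (List (Fin (n + m)))).Nodup :=
    Multiset.coe_nodup.2 (nodup_shuffles (nodup_IJ n m))
  rw [Multiset.Nodup.ext h1 h2]
  intro w
  simp only [Multiset.mem_map, Multiset.mem_coe]
  constructor
  · rintro ⟨σ, hσ, rfl⟩
    exact word_mem_shuffles hσ
  · intro hw
    obtain ⟨σ, hσ, hword⟩ := exists_word_eq hw
    exact ⟨σ, hσ, hword⟩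


end ChenAux

namespace ChenAux

lemma forall₂_map_map {α β : Type*} (R : β → β → Prop) (u v : α → β) (l : List α)
    (h : ∀ x ∈ l, R (u x) (v x)) : List.Forall₂ R (l.map u) (l.map v) := by
  induction l with
  | nil => simp
  | cons x l ih =>
    simp only [List.map_cons, List.forall₂_cons]
    exact ⟨h x (List.mem_cons_self (a := x) (l := l)), ih fun y hy => h y (List.mem_cons_of_mem x hy)⟩

lemma sum_shuffleSet_eq (n m : ℕ) (G : List (Fin (n + m)) → ℝ) :
    ∑ σ ∈ shuffleSet n m, G (word σ)
      = ((shuffles (IrevL n m) (JrevL n m)).map G).sum := by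
  rw [Finset.sum]
  rw [show ((shuffleSet n m).val.map fun σ => G (word σ))
      = ((shuffleSet n m).val.map word).map G from (Multiset.map_map G word _).symm]
  rw [shuffle_multiset]
  simp

end ChenAux

/-- Chen's shuffle formula for iterated integrals: for `t > 0` and
continuous functions `f₁,…,f_{n+m}` on `[0,t]`,
`F(f₁,…,f_n)(t) · F(f_{n+1},…,f_{n+m})(t)
  = ∑_{σ ∈ Sh_{n,m}} F(f_{σ⁻¹(1)},…,f_{σ⁻¹(n+m)})(t)`. -/
theorem chen_shuffle_formula (t : ℝ) (ht : 0 < t) (n m : ℕ)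
    (f : Fin (n + m) → ℝ → ℝ)
    (hf : ∀ i, ContinuousOn (f i) (Set.Icc 0 t)) :
    iterInt (List.ofFn fun i : Fin n => f (Fin.castAdd m i)) t
        * iterInt (List.ofFn fun j : Fin m => f (Fin.natAdd n j)) t
      = ∑ σ ∈ shuffleSet n m,
          iterInt (List.ofFn fun i : Fin (n + m) => f (σ⁻¹ i)) t := by
  classical
  have hle : (0 : ℝ) ≤ t := ht.le
  have htmem : t ∈ Set.Icc (0 : ℝ) t := ⟨hle, le_refl t⟩
  -- continuous extensions of the `f i` to all of `ℝ`
  set F : Fin (n + m) → ℝ → ℝ :=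
    fun i => Set.IccExtend hle ((Set.Icc (0 : ℝ) t).restrict (f i)) with hFdef
  have hFc : ∀ i, Continuous (F i) := fun i => (hf i).restrict.Icc_extend'
  have hEq : ∀ i, Set.EqOn (f i) (F i) (Set.Icc 0 t) := by
    intro i x hx
    show f i x = Set.IccExtend hle ((Set.Icc (0 : ℝ) t).restrict (f i)) x
    exact (Set.IccExtend_of_mem hle ((Set.Icc (0 : ℝ) t).restrict (f i)) hx).symm
  have hEq' : ∀ i, Set.EqOn (F i) (f i) (Set.Icc 0 t) := fun i x hx => (hEq i hx).symm
  -- rewrite the two factors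
  have hrev1 : (List.ofFn fun i : Fin n => f (Fin.castAdd m i)).reverse
      = (ChenAux.IrevL n m).map f := by
    rw [ChenAux.ofFn_reverse, ChenAux.IrevL, List.map_ofFn]
    rfl
  have hrev2 : (List.ofFn fun j : Fin m => f (Fin.natAdd n j)).reverse
      = (ChenAux.JrevL n m).map f := by
    rw [ChenAux.ofFn_reverse, ChenAux.JrevL, List.map_ofFn]
    rfl
  have congrIJ : ∀ (l : List (Fin (n + m))) (s : ℝ), s ∈ Set.Icc (0:ℝ) t →
      iterIntRev (l.map f) s = iterIntRev (l.map F) s := by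
    intro l s hs
    exact ChenAux.iterIntRev_congr
      (ChenAux.forall₂_map_map _ _ _ l (fun x _ => hEq x)) s hs
  have hcontI : ∀ g ∈ (ChenAux.IrevL n m).map F, Continuous g := by
    intro g hg
    rcases List.mem_map.1 hg with ⟨i, _, rfl⟩
    exact hFc i
  have hcontJ : ∀ g ∈ (ChenAux.JrevL n m).map F, Continuous g := by
    intro g hg
    rcases List.mem_map.1 hg with ⟨j, _, rfl⟩
    exact hFc j
  have main := ChenAux.chen_list ((ChenAux.IrevL n m).map F) ((ChenAux.JrevL n m).map F)
    hcontI hcontJ t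
  rw [ChenAux.shuffles_map] at main
  -- convert the LHS
  have lhs_eq : iterInt (List.ofFn fun i : Fin n => f (Fin.castAdd m i)) t
        * iterInt (List.ofFn fun j : Fin m => f (Fin.natAdd n j)) t
      = iterIntRev ((ChenAux.IrevL n m).map F) t * iterIntRev ((ChenAux.JrevL n m).map F) t := by
    rw [iterInt, iterInt, hrev1, hrev2, congrIJ _ _ htmem, congrIJ _ _ htmem]
  rw [lhs_eq, main]
  -- convert the sum over shuffles back to integrands `f`
  rw [List.map_map]
  have map_congr1 : (ChenAux.shuffles (ChenAux.IrevL n m) (ChenAux.JrevL n m)).map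
        ((fun w => iterIntRev w t) ∘ List.map F)
      = (ChenAux.shuffles (ChenAux.IrevL n m) (ChenAux.JrevL n m)).map
        (fun w => iterIntRev (w.map f) t) := by
    apply List.map_congr_left
    intro w _
    exact (congrIJ w t htmem).symm
  rw [map_congr1]
  -- convert the RHS
  rw [← ChenAux.sum_shuffleSet_eq n m (fun w => iterIntRev (w.map f) t)]
  apply Finset.sum_congr rfl
  intro σ _
  rw [iterInt, ChenAux.ofFn_reverse, ChenAux.word, List.map_ofFn]
  rfl

end
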